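/- Let a = (a_1, …, a_n) be a nonempty list of even integers with |a_i| ≥ 4 for every i. Then d([a]) = n; that is, the depth of the rational [a] equals the length of the list. -/

import Mathlib

/-- The continued fraction value `[a₁, …, aₙ] = 1/(a₁ + 1/(a₂ + ⋯ + 1/aₙ))` of a
list of integers, defined recursively with `[] = 0`, using the total division of `ℚ`. -/
def cfVal : List ℤ → ℚ
  | [] => 0
  | a :: l => 1 / ((a : ℚ) + cfVal l)

/-- `u` and `v` are the two Farey parents of `x`: there are integers `a, b, c, d` with
`1 ≤ b, d`, `b + d = q`, `a + c = p`, `a·d − b·c = ±1`, `u = a/b` and `v = c/d`,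
where `x = p/q` in lowest terms. -/
def IsFareyParents (x u v : ℚ) : Prop :=
  ∃ a b c d : ℤ, 1 ≤ b ∧ 1 ≤ d ∧ b + d = (x.den : ℤ) ∧ a + c = x.num ∧
    (a * d - b * c = 1 ∨ a * d - b * c = -1) ∧
    u = (a : ℚ) / (b : ℚ) ∧ v = (c : ℚ) / (d : ℚ)

/-- The graph of the depth function on `ℚ`: integers have depth `0`, and otherwise
`d(x) = 1 + min(d(u), d(v))` where `u, v` are the two Farey parents of `x`. -/
inductive DepthRel : ℚ → ℕ → Prop
  | int (x : ℚ) (h : x.den = 1) : DepthRel x 0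
  | step (x u v : ℚ) (m k : ℕ) (h : x.den ≠ 1) (hp : IsFareyParents x u v)
      (hu : DepthRel u m) (hv : DepthRel v k) : DepthRel x (1 + min m k)

/-- The depth `d(x)` of a rational number. -/
noncomputable def fareyDepth (x : ℚ) : ℕ := sInf {n | DepthRel x n}

lemma num_of_div {a b : ℤ} (hb : 0 < b) (h : Int.gcd a b = 1) :
    ((a:ℚ)/(b:ℚ)).num = a :=
  Rat.num_div_eq_of_coprime hb h

lemma den_of_div {a b : ℤ} (hb : 0 < b) (h : Int.gcd a b = 1) :
    (((a:ℚ)/(b:ℚ)).den : ℤ) = b :=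
  Rat.den_div_eq_of_coprime hb h

/-- The cross relation: if `u,v` are parents of `x` then `a*q - b*p = ±1`. -/
lemma cross_rel {p q a b c d : ℤ} (hq : b + d = q) (hp : a + c = p)
    (hdet : a * d - b * c = 1 ∨ a * d - b * c = -1) :
    a * q - b * p = 1 ∨ a * q - b * p = -1 := by
  have : a * q - b * p = a * d - b * c := by rw [← hq, ← hp]; ring
  rw [this]; exact hdet

/-- det coprimality: `a*d - b*c = ±1` implies `gcd a b = 1`. -/
lemma gcd_of_det {a b c d : ℤ} (hdet : a * d - b * c = 1 ∨ a * d - b * c = -1) :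
    Int.gcd a b = 1 := by
  rcases hdet with h | h
  · exact Int.isCoprime_iff_gcd_eq_one.mp ⟨d, -c, by linarith⟩
  · exact Int.isCoprime_iff_gcd_eq_one.mp ⟨-d, c, by linarith⟩

/-- If `|p| < q`, `1 ≤ b`, and `a*q - b*p = ±1`, then `|a| ≤ b`. -/
lemma parent_num_bound {p q a b : ℤ} (hq : 2 ≤ q) (hb : 1 ≤ b)
    (hlt : |p| < q) (h : a * q - b * p = 1 ∨ a * q - b * p = -1) :
    |a| ≤ b := by
  rw [abs_lt] at hlt
  rw [abs_le]
  rcases h with h | h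
  · constructor <;> nlinarith
  · constructor <;> nlinarith

lemma div_abs_le_one {a b : ℤ} (hb : 1 ≤ b) (h : |a| ≤ b) : |(a:ℚ)/(b:ℚ)| ≤ 1 := by
  have hb0 : (0:ℚ) < (b:ℚ) := by exact_mod_cast hb
  rw [abs_div, abs_of_pos hb0, div_le_one hb0, ← Int.cast_abs]
  exact_mod_cast h

lemma parents_abs_le' {x u v : ℚ} (hx : |x.num| < (x.den:ℤ)) (h : IsFareyParents x u v) :
    |u| ≤ 1 ∧ |v| ≤ 1 := by
  obtain ⟨a, b, c, d, hb, hd, hsum, hnum, hdet, hu, hv⟩ := h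
  have hq : 2 ≤ (x.den:ℤ) := by
    have := abs_nonneg x.num; omega
  have h1 : a * (x.den:ℤ) - b * x.num = 1 ∨ a * (x.den:ℤ) - b * x.num = -1 :=
    cross_rel hsum hnum hdet
  have h2 : c * (x.den:ℤ) - d * x.num = 1 ∨ c * (x.den:ℤ) - d * x.num = -1 :=
    cross_rel (show d + b = (x.den:ℤ) by omega) (show c + a = x.num by omega)
      (by rcases hdet with h | h
          · right; linarith
          · left; linarith)
  have hab : |a| ≤ b := parent_num_bound hq hb hx h1
  have hcd : |c| ≤ d := parent_num_bound hq hd hx h2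
  exact ⟨hu ▸ div_abs_le_one hb hab, hv ▸ div_abs_le_one hd hcd⟩

lemma abs_num_lt {x : ℚ} (hx : |x| ≤ 1) (hden : x.den ≠ 1) : |x.num| < (x.den:ℤ) := by
  have hd0 : (0:ℚ) < (x.den:ℚ) := by exact_mod_cast x.pos
  have hle : |x.num| ≤ (x.den:ℤ) := by
    have : |(x.num:ℚ)| ≤ (x.den:ℚ) := by
      rw [← Rat.num_div_den x, abs_div, abs_of_pos hd0, div_le_one hd0] at hx
      exact hx
    exact_mod_cast this
  rcases lt_or_eq_of_le hle with h | h
  · exact h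
  · exfalso
    have hred := x.reduced
    have : x.num.natAbs = x.den := by
      rw [Int.abs_eq_natAbs] at h; exact_mod_cast h
    rw [this] at hred
    rw [Nat.Coprime, Nat.gcd_self] at hred
    exact hden hred

lemma parents_den {x u v : ℚ} (h : IsFareyParents x u v) :
    (u.den:ℤ) < (x.den:ℤ) ∧ (v.den:ℤ) < (x.den:ℤ) := by
  obtain ⟨a, b, c, d, hb, hd, hsum, hnum, hdet, hu, hv⟩ := h
  have hgab : Int.gcd a b = 1 := gcd_of_det hdet
  have hgcd : Int.gcd c d = 1 := by
    apply gcd_of_det (c := a) (d := b)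
    rcases hdet with h | h
    · right; linarith
    · left; linarith
  have h1 : (u.den:ℤ) = b := hu ▸ den_of_div (by omega) hgab
  have h2 : (v.den:ℤ) = d := hv ▸ den_of_div (by omega) hgcd
  omega

lemma parents_exist (x : ℚ) (h : x.den ≠ 1) : ∃ u v, IsFareyParents x u v := by
  set p := x.num with hp
  set q := (x.den:ℤ) with hqdef
  have hq : 2 ≤ q := by
    have := x.pos; omega
  have hcop : IsCoprime q p := by
    rw [Int.isCoprime_iff_gcd_eq_one, Int.gcd_comm]
    simpa [Int.gcd, hp, hqdef] using x.reduced
  obtain ⟨s, t, hst⟩ := hcop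
  -- s*q + t*p = 1 ; want a*q - b*p = 1 with 1 ≤ b ≤ q-1
  set b := (-t) % q with hb
  have hq0 : q ≠ 0 := by omega
  have hb0 : 0 ≤ b := Int.emod_nonneg _ hq0
  have hbq : b < q := Int.emod_lt_of_pos _ (by omega)
  have hdvd : q ∣ (-t) - b := Int.dvd_self_sub_of_emod_eq rfl
  obtain ⟨e, he⟩ := hdvd
  set a := s - e * p with ha
  have key : a * q - b * p = 1 := by
    have ht : t = -b - q * e := by linarith
    calc a * q - b * p = s * q + (-b - q * e) * p := by ring
    _ = s * q + t * p := by rw [ht]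
    _ = 1 := hst
  have hbne : b ≠ 0 := by
    intro h0
    rw [h0] at key
    have : q ∣ 1 := ⟨a, by linarith⟩
    have := Int.le_of_dvd one_pos this
    omega
  refine ⟨(a:ℚ)/(b:ℚ), ((p-a:ℤ):ℚ)/((q-b:ℤ):ℚ), a, b, p - a, q - b, by omega, by omega,
    by omega, by omega, ?_, rfl, rfl⟩
  left; linarith [key]

lemma depthRel_total_aux : ∀ (N : ℕ) (x : ℚ), x.den ≤ N → ∃ n, DepthRel x n := by
  intro N
  induction N with
  | zero => intro x hx; exact absurd x.pos (by omega)
  | succ N ih =>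
    intro x hx
    by_cases h1 : x.den = 1
    · exact ⟨0, .int x h1⟩
    · obtain ⟨u, v, hp⟩ := parents_exist x h1
      have hlt := parents_den hp
      obtain ⟨m, hm⟩ := ih u (by omega)
      obtain ⟨k, hk⟩ := ih v (by omega)
      exact ⟨1 + min m k, .step x u v m k h1 hp hm hk⟩

lemma depthRel_total (x : ℚ) : ∃ n, DepthRel x n := depthRel_total_aux x.den x le_rfl

lemma gcd_den_num (x : ℚ) : Int.gcd (x.den:ℤ) x.num = 1 := by
  rw [Int.gcd_comm]
  simpa [Int.gcd] using x.reduced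

lemma bezout_unique {p q a b a' b' ε : ℤ} (hq : 2 ≤ q) (hcop : Int.gcd q p = 1)
    (hb1 : 1 ≤ b) (hb2 : b ≤ q - 1) (hb1' : 1 ≤ b') (hb2' : b' ≤ q - 1)
    (h : a * q - b * p = ε) (h' : a' * q - b' * p = ε) : a = a' ∧ b = b' := by
  have hdvd : q ∣ (b - b') * p := ⟨a - a', by linarith⟩
  have hqb : q ∣ (b - b') := Int.dvd_of_dvd_mul_left_of_gcd_one hdvd hcop
  obtain ⟨t, ht⟩ := hqb
  have ht0 : t = 0 := by
    rcases lt_trichotomy t 0 with h0 | h0 | h0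
    · nlinarith
    · exact h0
    · nlinarith
  have hbb : b = b' := by rw [ht0, mul_zero] at ht; omega
  refine ⟨?_, hbb⟩
  have : a * q = a' * q := by rw [hbb] at h; linarith
  exact mul_right_cancel₀ (by omega) this

lemma parents_unique {x u v u' v' : ℚ} (h1 : IsFareyParents x u v)
    (h2 : IsFareyParents x u' v') :
    (u = u' ∧ v = v') ∨ (u = v' ∧ v = u') := by
  obtain ⟨a, b, c, d, hb, hd, hsum, hnum, hdet, hu, hv⟩ := h1
  obtain ⟨a', b', c', d', hb', hd', hsum', hnum', hdet', hu', hv'⟩ := h2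
  set p := x.num
  set q := (x.den:ℤ) with hqdef
  have hq : 2 ≤ q := by omega
  have hcop : Int.gcd q p = 1 := gcd_den_num x
  have e1 : a * q - b * p = 1 ∨ a * q - b * p = -1 := cross_rel hsum hnum hdet
  have e1' : a' * q - b' * p = 1 ∨ a' * q - b' * p = -1 := cross_rel hsum' hnum' hdet'
  have e2 : c * q - d * p = -(a * q - b * p) := by linear_combination (q) * hnum - (p) * hsum
  have e2' : c' * q - d' * p = -(a' * q - b' * p) := by
    linear_combination (q) * hnum' - (p) * hsum'
  rcases e1 with f1 | f1 <;> rcases e1' with f1' | f1'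
  · -- both +1 : match (a,b)-(a',b'), (c,d)-(c',d')
    obtain ⟨g1, g2⟩ := bezout_unique hq hcop hb (by omega) hb' (by omega) f1 f1'
    obtain ⟨g3, g4⟩ := bezout_unique (ε := -1) hq hcop hd (by omega) hd' (by omega)
      (by rw [e2]; linarith) (by rw [e2']; linarith)
    left
    constructor
    · rw [hu, hu', g1, g2]
    · rw [hv, hv', g3, g4]
  · -- +1 / -1 : match (a,b)-(c',d'), (c,d)-(a',b')
    obtain ⟨g1, g2⟩ := bezout_unique hq hcop hb (by omega) hd' (by omega) f1
      (by rw [e2']; linarith)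
    obtain ⟨g3, g4⟩ := bezout_unique hq hcop hd (by omega) hb' (by omega)
      (by rw [e2]; linarith) f1'
    right
    constructor
    · rw [hu, hv', g1, g2]
    · rw [hv, hu', g3, g4]
  · obtain ⟨g1, g2⟩ := bezout_unique hq hcop hb (by omega) hd' (by omega) f1
      (by rw [e2']; linarith)
    obtain ⟨g3, g4⟩ := bezout_unique hq hcop hd (by omega) hb' (by omega)
      (by rw [e2]; linarith) f1'
    right
    constructor
    · rw [hu, hv', g1, g2]
    · rw [hv, hu', g3, g4]
  · obtain ⟨g1, g2⟩ := bezout_unique hq hcop hb (by omega) hb' (by omega) f1 f1'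
    obtain ⟨g3, g4⟩ := bezout_unique (ε := 1) hq hcop hd (by omega) hd' (by omega)
      (by rw [e2]; linarith) (by rw [e2']; linarith)
    left
    constructor
    · rw [hu, hu', g1, g2]
    · rw [hv, hv', g3, g4]

lemma depthRel_unique_aux : ∀ (N : ℕ) (x : ℚ), x.den ≤ N →
    ∀ m k, DepthRel x m → DepthRel x k → m = k := by
  intro N
  induction N with
  | zero => intro x hx; exact absurd x.pos (by omega)
  | succ N ih =>
    intro x hx m k hm hk
    cases hm with
    | int _ h1 =>
      cases hk with
      | int => rfl
      | step _ _ _ _ _ h2 => exact absurd h1 h2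
    | step _ u v m1 k1 h1 hp hu hv =>
      cases hk with
      | int _ h2 => exact absurd h2 h1
      | step _ u' v' m1' k1' h2 hp' hu' hv' =>
        have hd := parents_den hp
        rcases parents_unique hp hp' with ⟨g1, g2⟩ | ⟨g1, g2⟩
        · have r1 := ih u (by omega) m1 m1' hu (by rwa [g1])
          have r2 := ih v (by omega) k1 k1' hv (by rwa [g2])
          omega
        · have r1 := ih u (by omega) m1 k1' hu (by rwa [g1])
          have r2 := ih v (by omega) k1 m1' hv (by rwa [g2])
          omega

lemma depthRel_unique {x : ℚ} {m k : ℕ} (hm : DepthRel x m) (hk : DepthRel x k) : m = k :=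
  depthRel_unique_aux x.den x le_rfl m k hm hk

lemma sigma_cases (a : ℤ) (ha : 3 ≤ |a|) : ∃ σ : ℤ, (σ = 1 ∨ σ = -1) ∧ 3 ≤ σ * a := by
  rcases le_or_gt 0 a with h | h
  · exact ⟨1, Or.inl rfl, by rw [abs_of_nonneg h] at ha; omega⟩
  · exact ⟨-1, Or.inr rfl, by rw [abs_of_neg h] at ha; omega⟩

lemma B_bound {a α β σ : ℤ} (hσ : σ = 1 ∨ σ = -1) (hσa : 3 ≤ σ * a)
    (hβ : 1 ≤ β) (hαβ : |α| ≤ β) : 2 * β ≤ σ * (a * β + α) := by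
  rw [abs_le] at hαβ
  have h1 : σ * (a * β + α) = (σ * a) * β + σ * α := by
    rcases hσ with rfl | rfl <;> ring
  have h2 : -β ≤ σ * α := by rcases hσ with rfl | rfl <;> omega
  have h3 : 3 * β ≤ (σ * a) * β := by nlinarith
  omega

lemma shift_val {a α β σ : ℤ} (hβ : β ≠ 0) (hB : a * β + α ≠ 0) (hσ : σ = 1 ∨ σ = -1) :
    1/((a:ℚ) + (α:ℚ)/(β:ℚ)) = ((σ*β:ℤ):ℚ)/((σ*(a*β+α):ℤ):ℚ) := by
  have hβ0 : (β:ℚ) ≠ 0 := Int.cast_ne_zero.mpr hβ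
  have hσ0 : (σ:ℚ) ≠ 0 := by rcases hσ with rfl | rfl <;> norm_num
  have key : (a:ℚ) + (α:ℚ)/(β:ℚ) = ((a*β+α:ℤ):ℚ)/((β:ℤ):ℚ) := by
    push_cast
    field_simp
  rw [key, one_div_div]
  push_cast
  rw [mul_div_mul_left _ _ hσ0]

lemma unit_gcd {σ m n : ℤ} (hσ : σ = 1 ∨ σ = -1) (h : Int.gcd m n = 1) :
    Int.gcd (σ*m) (σ*n) = 1 := by
  rcases hσ with rfl | rfl
  · simpa using h
  · simpa [Int.gcd, Int.natAbs_mul] using h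

lemma key_lemma {w : ℚ} {n : ℕ} (hd : DepthRel w n) :
    |w| ≤ 1 → ∀ a : ℤ, 3 ≤ |a| → DepthRel (1/((a:ℚ)+w)) (n+1) := by
  induction hd with
  | int w hw =>
    intro hw1 a ha
    have hwt : ((w.num:ℤ):ℚ) = w := (Rat.den_eq_one_iff w).mp hw
    set t := w.num with htdef
    have ht1 : |t| ≤ 1 := by
      rw [← hwt] at hw1
      exact_mod_cast hw1
    set M := a + t with hM
    have ht1' : -1 ≤ t ∧ t ≤ 1 := abs_le.mp ht1
    have hex : ∃ σ : ℤ, (σ = 1 ∨ σ = -1) ∧ 2 ≤ σ * M := by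
      rcases le_or_gt 0 a with h | h
      · rw [abs_of_nonneg h] at ha
        exact ⟨(1:ℤ), Or.inl rfl, by omega⟩
      · rw [abs_of_neg h] at ha
        exact ⟨(-1:ℤ), Or.inr rfl, by omega⟩
    obtain ⟨σ, hσ, hσM2⟩ := hex
    have hval : 1/((a:ℚ)+w) = ((σ*1:ℤ):ℚ)/((σ*M:ℤ):ℚ) := by
      have : (a:ℚ) + w = ((M:ℤ):ℚ) := by rw [← hwt]; push_cast [hM]; ring
      rw [this]
      have hM0 : ((M:ℤ):ℚ) ≠ 0 := by
        have : M ≠ 0 := by rcases hσ with rfl | rfl <;> omega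
        exact_mod_cast this
      rcases hσ with rfl | rfl <;> push_cast <;> field_simp
    have hgcd : Int.gcd (σ*1) (σ*M) = 1 := by
      apply unit_gcd hσ
      simp [Int.gcd]
    have hnum : (1/((a:ℚ)+w)).num = σ*1 := by
      rw [hval]; exact num_of_div (by omega) hgcd
    have hden : ((1/((a:ℚ)+w)).den : ℤ) = σ*M := by
      rw [hval]; exact den_of_div (by omega) hgcd
    have hdne : (1/((a:ℚ)+w)).den ≠ 1 := by
      intro h
      rw [h] at hden
      omega
    have hdet0 : 0*(σ*M-1) - 1*σ = 1 ∨ 0*(σ*M-1) - 1*σ = -1 := by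
      rcases hσ with rfl | rfl
      · right; ring
      · left; ring
    obtain ⟨kk, hkk⟩ := depthRel_total (((σ:ℤ):ℚ)/((σ*M-1:ℤ):ℚ))
    have hstep := DepthRel.step (1/((a:ℚ)+w)) (((0:ℤ):ℚ)/((1:ℤ):ℚ))
        (((σ:ℤ):ℚ)/((σ*M-1:ℤ):ℚ)) 0 kk hdne
        ⟨0, 1, σ, σ*M-1, le_refl 1, by omega, by rw [hden]; ring, by rw [hnum]; ring,
          hdet0, rfl, rfl⟩
        (by simpa using DepthRel.int 0 rfl) hkk
    simpa using hstep
  | step x u v m k h1 hp hu hv ihu ihv =>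
    intro hx1 a ha
    have hxlt := abs_num_lt hx1 h1
    obtain ⟨hu1, hv1⟩ := parents_abs_le' hxlt hp
    obtain ⟨α, β, γ, δ, hβ, hδ, hsum, hnum, hdet, hueq, hveq⟩ := hp
    set p := x.num with hpdef
    set q := (x.den:ℤ) with hqdef
    have hq : 2 ≤ q := by omega
    have cα : α * q - β * p = 1 ∨ α * q - β * p = -1 := cross_rel hsum hnum hdet
    have crel : γ * q - δ * p = -(α * q - β * p) := by
      linear_combination q * hnum - p * hsum
    have cγ : γ * q - δ * p = 1 ∨ γ * q - δ * p = -1 := by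
      rcases cα with h | h
      · right; rw [crel, h]
      · left; rw [crel, h]; ring
    have hαβ : |α| ≤ β := parent_num_bound hq hβ hxlt cα
    have hγδ : |γ| ≤ δ := parent_num_bound hq hδ hxlt cγ
    obtain ⟨σ, hσ, hσa⟩ := sigma_cases a ha
    have hB2 : 2 * β ≤ σ * (a * β + α) := B_bound hσ hσa hβ hαβ
    have hD2 : 2 * δ ≤ σ * (a * δ + γ) := B_bound hσ hσa hδ hγδ
    have hP2 : 2 * q ≤ σ * (a * q + p) := B_bound hσ hσa (by omega) hxlt.le
    have hB0 : a * β + α ≠ 0 := by rcases hσ with rfl | rfl <;> omega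
    have hD0 : a * δ + γ ≠ 0 := by rcases hσ with rfl | rfl <;> omega
    have hP0 : a * q + p ≠ 0 := by rcases hσ with rfl | rfl <;> omega
    -- the value of x as a fraction
    have hx : x = (p:ℚ)/(q:ℚ) := by
      rw [hpdef, hqdef]; push_cast; exact (Rat.num_div_den x).symm
    have hXval : 1/((a:ℚ)+x) = ((σ*q:ℤ):ℚ)/((σ*(a*q+p):ℤ):ℚ) := by
      rw [hx]; exact shift_val (by omega) hP0 hσ
    have hgQP : Int.gcd q p = 1 := gcd_den_num x
    have hgP : Int.gcd (σ*q) (σ*(a*q+p)) = 1 := by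
      apply unit_gcd hσ
      rw [← Int.isCoprime_iff_gcd_eq_one] at hgQP ⊢
      have := hgQP.add_mul_left_right a
      have he : p + q * a = a * q + p := by ring
      rwa [he] at this
    have hXnum : (1/((a:ℚ)+x)).num = σ*q := by
      rw [hXval]; exact num_of_div (by linarith) hgP
    have hXden : ((1/((a:ℚ)+x)).den : ℤ) = σ*(a*q+p) := by
      rw [hXval]; exact den_of_div (by linarith) hgP
    have hXdne : (1/((a:ℚ)+x)).den ≠ 1 := by
      intro h
      rw [h] at hXden
      omega
    -- the parents of the new value
    have hU : DepthRel (((σ*β:ℤ):ℚ)/((σ*(a*β+α):ℤ):ℚ)) (m+1) := by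
      have := ihu hu1 a ha
      rw [hueq, shift_val (by omega) hB0 hσ] at this
      exact this
    have hV : DepthRel (((σ*δ:ℤ):ℚ)/((σ*(a*δ+γ):ℤ):ℚ)) (k+1) := by
      have := ihv hv1 a ha
      rw [hveq, shift_val (by omega) hD0 hσ] at this
      exact this
    have hFP : IsFareyParents (1/((a:ℚ)+x)) (((σ*β:ℤ):ℚ)/((σ*(a*β+α):ℤ):ℚ))
        (((σ*δ:ℤ):ℚ)/((σ*(a*δ+γ):ℤ):ℚ)) := by
      refine ⟨σ*β, σ*(a*β+α), σ*δ, σ*(a*δ+γ), by omega, by omega, ?_, ?_, ?_, rfl, rfl⟩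
      · rw [hXden]; linear_combination σ*a*hsum + σ*hnum
      · rw [hXnum]; linear_combination σ*hsum
      · rcases hdet with h | h
        · right
          rcases hσ with rfl | rfl <;> linear_combination -h
        · left
          rcases hσ with rfl | rfl <;> linear_combination -h
    have hstep := DepthRel.step _ _ _ (m+1) (k+1) hXdne hFP hU hV
    have harith : 1 + min (m+1) (k+1) = 1 + min m k + 1 := by omega
    rwa [harith] at hstep

lemma cf_bound : ∀ L : List ℤ, (∀ a ∈ L, 4 ≤ |a|) → |cfVal L| ≤ 1/3 := by
  intro L
  induction L with
  | nil => intro _; simp [cfVal]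
  | cons a l ih =>
    intro h
    have hOK := ih (fun b hb => h b (List.mem_cons_of_mem a hb))
    have ha : (4:ℚ) ≤ |(a:ℚ)| := by
      have := h a List.mem_cons_self
      have : ((4:ℤ):ℚ) ≤ ((|a|:ℤ):ℚ) := by exact_mod_cast this
      simpa using this
    have habs : (11/3 : ℚ) ≤ |(a:ℚ) + cfVal l| := by
      have h1 : |(a:ℚ)| ≤ |(a:ℚ) + cfVal l| + |cfVal l| := by
        calc |(a:ℚ)| = |((a:ℚ) + cfVal l) + (-(cfVal l))| := by ring_nf
        _ ≤ |(a:ℚ) + cfVal l| + |(-(cfVal l))| := abs_add_le _ _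
        _ = |(a:ℚ) + cfVal l| + |cfVal l| := by rw [abs_neg]
      linarith
    show |1 / ((a:ℚ) + cfVal l)| ≤ 1/3
    rw [abs_div, abs_one]
    rw [div_le_div_iff₀ (by linarith) (by norm_num)]
    linarith

lemma cf_depth : ∀ L : List ℤ, (∀ a ∈ L, 4 ≤ |a|) → DepthRel (cfVal L) L.length := by
  intro L
  induction L with
  | nil => exact fun _ => DepthRel.int 0 rfl
  | cons a l ih =>
    intro h
    have hOK := ih (fun b hb => h b (List.mem_cons_of_mem a hb))
    have hb := cf_bound l (fun b hb => h b (List.mem_cons_of_mem a hb))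
    have ha : 3 ≤ |a| := by have := h a List.mem_cons_self; omega
    have := key_lemma hOK (by linarith) a ha
    simpa [cfVal] using this

/-- If `a = (a₁, …, aₙ)` is a nonempty list of even integers with `|aᵢ| ≥ 4` for all `i`,
then `d([a]) = n`. -/
theorem stmt12 (L : List ℤ) (hL : L ≠ []) (h : ∀ a ∈ L, Even a ∧ 4 ≤ |a|) :
    fareyDepth (cfVal L) = L.length := by
  have hd := cf_depth L (fun a ha => (h a ha).2)
  have hset : {n | DepthRel (cfVal L) n} = {L.length} := by
    ext n
    simp only [Set.mem_setOf_eq, Set.mem_singleton_iff]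
    exact ⟨fun hn => depthRel_unique hn hd, fun hn => hn ▸ hd⟩
  rw [fareyDepth, hset, csInf_singleton]
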